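/- Let n ≥ 4 be an integer, let K_{6n} be given a red/blue edge-coloring that is (F_n, K_4)-free, and suppose there is a set K of 2n vertices all of whose internal edges are red. Then the coloring restricted to the 4n vertices outside K contains no blue cycle of length 7. -/

import Mathlib

open SimpleGraph
open scoped Classical

/-- The fan graph `Fₙ`: the join of a single vertex (the center, `none`) with `n`
pairwise disjoint edges (`some (i, a)` is matched with `some (i, !a)`). -/
def Fan (n : ℕ) : SimpleGraph (Option (Fin n × Bool)) where
  Adj u v := u ≠ v ∧ (u = none ∨ v = none ∨ ∃ i a b, u = some (i, a) ∧ v = some (i, b))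
  symm := by
    constructor
    rintro u v ⟨h1, h2⟩
    exact ⟨h1.symm, by tauto⟩
  loopless := by constructor; rintro u ⟨h1, -⟩; exact h1 rfl

/-- `G` contains a subgraph isomorphic to the fan graph `Fₙ`. -/
def ContainsFan {V : Type*} (G : SimpleGraph V) (n : ℕ) : Prop :=
  ∃ f : Option (Fin n × Bool) ↪ V, ∀ u v, (Fan n).Adj u v → G.Adj (f u) (f v)

/-- `G` contains a subgraph isomorphic to `K₄`. -/
def ContainsK4 {V : Type*} (G : SimpleGraph V) : Prop :=
  ∃ a b c d : V, G.Adj a b ∧ G.Adj a c ∧ G.Adj a d ∧ G.Adj b c ∧ G.Adj b d ∧ G.Adj c d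

section Aux

variable {V : Type*} {G : SimpleGraph V}

/-- Build a fan from a center and an injective family of `n` red edges. -/
lemma containsFan_of_center {n : ℕ} (c : V) (f : Fin n × Bool → V)
    (hinj : Function.Injective f) (hc : ∀ p, f p ≠ c)
    (h1 : ∀ p, G.Adj c (f p))
    (h2 : ∀ i a b, a ≠ b → G.Adj (f (i, a)) (f (i, b))) :
    ContainsFan G n := by
  refine ⟨⟨fun o => Option.elim o c f, ?_⟩, ?_⟩
  · rintro (_ | p) (_ | q) h
    · rfl
    · exact absurd h.symm (hc q)
    · exact absurd h (hc p)
    · simpa using congrArg some (hinj h)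
  · rintro u v ⟨hne, h⟩
    rcases h with rfl | rfl | ⟨i, a, b, rfl, rfl⟩
    · rcases v with _ | q
      · exact absurd rfl hne
      · exact h1 q
    · rcases u with _ | p
      · exact absurd rfl hne
      · exact (h1 p).symm
    · refine h2 i a b ?_
      rintro rfl; exact hne rfl

/-- Prepend a new red edge to a family of red edges. -/
lemma matching_cons {k : ℕ} (x y : V) (hxy : G.Adj x y)
    (f : Fin k × Bool → V) (hinj : Function.Injective f)
    (hfx : ∀ p, f p ≠ x) (hfy : ∀ p, f p ≠ y)
    (h2 : ∀ i a b, a ≠ b → G.Adj (f (i, a)) (f (i, b))) :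
    ∃ g : Fin (k + 1) × Bool → V, Function.Injective g ∧
      (∀ p, g p = x ∨ g p = y ∨ ∃ q, g p = f q) ∧
      ∀ i a b, a ≠ b → G.Adj (g (i, a)) (g (i, b)) := by
  have hxyne : x ≠ y := hxy.ne
  refine ⟨fun p => Fin.cases (cond p.2 y x) (fun j => f (j, p.2)) p.1, ?_, ?_, ?_⟩
  · rintro ⟨i, a⟩ ⟨j, b⟩ h
    induction i using Fin.cases with
    | zero =>
      induction j using Fin.cases with
      | zero =>
        simp only [Fin.cases_zero] at h
        cases a <;> cases b <;> simp_all
      | succ j =>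
        simp only [Fin.cases_zero, Fin.cases_succ] at h
        cases a
        · exact absurd h.symm (hfx _)
        · exact absurd h.symm (hfy _)
    | succ i =>
      induction j using Fin.cases with
      | zero =>
        simp only [Fin.cases_zero, Fin.cases_succ] at h
        cases b
        · exact absurd h (hfx _)
        · exact absurd h (hfy _)
      | succ j =>
        simp only [Fin.cases_succ] at h
        have := hinj h
        simp only [Prod.mk.injEq] at this
        simp [this.1, this.2]
  · rintro ⟨i, a⟩
    induction i using Fin.cases with
    | zero => cases a <;> simp
    | succ i => simp only [Fin.cases_succ]; exact Or.inr (Or.inr ⟨_, rfl⟩)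
  · intro i a b hab
    induction i using Fin.cases with
    | zero =>
      cases a <;> cases b <;> simp_all
      · exact hxy.symm
    | succ i => simpa using h2 i a b hab

/-- In a set where every `d`-subset spans an edge, one finds a matching of size `k`
provided `2k + d ≤ |S| + 2`. -/
lemma exists_matching [DecidableEq V] (d : ℕ) :
    ∀ (k : ℕ) (S : Finset V),
      (∀ S' ⊆ S, d ≤ S'.card → ∃ x ∈ S', ∃ y ∈ S', G.Adj x y) →
      2 * k + d ≤ S.card + 2 →
      ∃ f : Fin k × Bool → V, Function.Injective f ∧ (∀ p, f p ∈ S) ∧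
        ∀ i a b, a ≠ b → G.Adj (f (i, a)) (f (i, b)) := by
  intro k
  induction k with
  | zero =>
    intro S _ _
    exact ⟨fun p => p.1.elim0, fun p => p.1.elim0, fun p => p.1.elim0,
      fun i => i.elim0⟩
  | succ k ih =>
    intro S hfind hcard
    obtain ⟨x, hx, y, hy, hxy⟩ := hfind S le_rfl (by omega)
    have hxyne : x ≠ y := hxy.ne
    set S' : Finset V := (S.erase x).erase y with hS'
    have hyx : y ∈ S.erase x := Finset.mem_erase.2 ⟨Ne.symm hxyne, hy⟩
    have hS'card : S'.card = S.card - 2 := by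
      rw [hS', Finset.card_erase_of_mem hyx, Finset.card_erase_of_mem hx]
      omega
    have hS'sub : S' ⊆ S := (Finset.erase_subset _ _).trans (Finset.erase_subset _ _)
    obtain ⟨f, hinj, hmem, h2⟩ := ih S' (fun T hT => hfind T (hT.trans hS'sub))
      (by omega)
    have hfx : ∀ p, f p ≠ x := fun p =>
      Finset.ne_of_mem_erase (Finset.mem_of_mem_erase (hmem p) : f p ∈ S.erase x)
    have hfy : ∀ p, f p ≠ y := fun p => Finset.ne_of_mem_erase (hmem p)
    obtain ⟨g, hginj, hgmem, hg2⟩ := matching_cons x y hxy f hinj hfx hfy h2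
    refine ⟨g, hginj, ?_, hg2⟩
    intro p
    rcases hgmem p with h | h | ⟨q, h⟩
    · rw [h]; exact hx
    · rw [h]; exact hy
    · rw [h]; exact hS'sub (hmem q)

end Aux

section Main

variable {n : ℕ} {R : SimpleGraph (Fin (6 * n))}

/-- A vertex outside `K` cannot have two red neighbours in `K`. -/
lemma two_red_nbrs_fan (hn : 4 ≤ n) (hfan : ¬ ContainsFan R n)
    (K : Finset (Fin (6 * n))) (hKcard : K.card = 2 * n) (hKred : R.IsClique ↑K)
    {x a b : Fin (6 * n)} (hx : x ∉ K) (ha : a ∈ K) (hb : b ∈ K) (hab : a ≠ b)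
    (hxa : R.Adj x a) (hxb : R.Adj x b) : False := by
  classical
  obtain ⟨m, rfl⟩ : ∃ m, n = m + 1 := ⟨n - 1, by omega⟩
  set K' : Finset (Fin (6 * (m + 1))) := (K.erase a).erase b with hK'
  have hba : b ∈ K.erase a := Finset.mem_erase.2 ⟨Ne.symm hab, hb⟩
  have hK'card : K'.card = 2 * m := by
    rw [hK', Finset.card_erase_of_mem hba, Finset.card_erase_of_mem ha]
    omega
  have hK'sub : K' ⊆ K := (Finset.erase_subset _ _).trans (Finset.erase_subset _ _)
  obtain ⟨f, hinj, hmem, h2⟩ := exists_matching (G := R) 2 m K'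
    (fun T hT hTc => by
      obtain ⟨u, w, hu, hw, huw⟩ := Finset.one_lt_card_iff.1 hTc
      exact ⟨u, hu, w, hw, hKred (hK'sub (hT hu)) (hK'sub (hT hw)) huw⟩)
    (by omega)
  have hfx : ∀ p, f p ≠ x := fun p hp => hx (hp ▸ hK'sub (hmem p))
  have hfb : ∀ p, f p ≠ b := fun p => Finset.ne_of_mem_erase (hmem p)
  obtain ⟨g, hginj, hgmem, hg2⟩ := matching_cons x b hxb f hinj hfx hfb h2
  refine hfan (containsFan_of_center a g hginj ?_ ?_ hg2)
  · intro p hp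
    rcases hgmem p with h | h | ⟨q, h⟩
    · exact hx (by rw [← h, hp]; exact ha)
    · exact hab (by rw [← hp, h])
    · exact Finset.ne_of_mem_erase
        (Finset.mem_of_mem_erase (h ▸ hmem q) : g p ∈ K.erase a) (by rw [hp])
  · intro p
    rcases hgmem p with h | h | ⟨q, h⟩
    · rw [h]; exact hxa.symm
    · rw [h]; exact hKred ha hb hab
    · refine hKred ha (hK'sub (h ▸ hmem q)) ?_
      exact fun hc => Finset.ne_of_mem_erase
        (Finset.mem_of_mem_erase (h ▸ hmem q) : g p ∈ K.erase a) hc.symm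

lemma red_deg_K_le_one (hn : 4 ≤ n) (hfan : ¬ ContainsFan R n)
    (K : Finset (Fin (6 * n))) (hKcard : K.card = 2 * n) (hKred : R.IsClique ↑K)
    {x : Fin (6 * n)} (hx : x ∉ K) :
    (K.filter (fun w => R.Adj x w)).card ≤ 1 := by
  by_contra h
  obtain ⟨a, b, ha, hb, hab⟩ := Finset.one_lt_card_iff.1
    (show 1 < (K.filter (fun w => R.Adj x w)).card by omega)
  rw [Finset.mem_filter] at ha hb
  exact two_red_nbrs_fan hn hfan K hKcard hKred hx ha.1 hb.1 hab ha.2 hb.2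

/-- There is no blue triangle outside `K`. -/
lemma no_blue_triangle (hn : 4 ≤ n) (hfan : ¬ ContainsFan R n)
    (hK4 : ¬ ContainsK4 Rᶜ)
    (K : Finset (Fin (6 * n))) (hKcard : K.card = 2 * n) (hKred : R.IsClique ↑K)
    {x y z : Fin (6 * n)} (hx : x ∉ K) (hy : y ∉ K) (hz : z ∉ K)
    (hxy : Rᶜ.Adj x y) (hxz : Rᶜ.Adj x z) (hyz : Rᶜ.Adj y z) : False := by
  set Bad : Finset (Fin (6 * n)) :=
    (K.filter (fun w => R.Adj x w)) ∪ (K.filter (fun w => R.Adj y w)) ∪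
      (K.filter (fun w => R.Adj z w)) with hBad
  have hBadcard : Bad.card ≤ 3 := by
    have h1 := red_deg_K_le_one hn hfan K hKcard hKred hx
    have h2 := red_deg_K_le_one hn hfan K hKcard hKred hy
    have h3 := red_deg_K_le_one hn hfan K hKcard hKred hz
    calc Bad.card ≤ _ + _ := Finset.card_union_le _ _
    _ ≤ (_ + _) + _ := by gcongr; exact Finset.card_union_le _ _
    _ ≤ 3 := by omega
  have hnsub : ¬ K ⊆ Bad := by
    intro hsub
    have := Finset.card_le_card hsub
    omega
  obtain ⟨w, hwK, hwB⟩ := Finset.not_subset.1 hnsub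
  have hwx : ¬ R.Adj x w := fun h => hwB (by
    rw [hBad]; simp only [Finset.mem_union, Finset.mem_filter]; tauto)
  have hwy : ¬ R.Adj y w := fun h => hwB (by
    rw [hBad]; simp only [Finset.mem_union, Finset.mem_filter]; tauto)
  have hwz : ¬ R.Adj z w := fun h => hwB (by
    rw [hBad]; simp only [Finset.mem_union, Finset.mem_filter]; tauto)
  refine hK4 ⟨w, x, y, z, ?_, ?_, ?_, hxy, hxz, hyz⟩
  · exact (compl_adj R w x).2 ⟨fun h => hx (h ▸ hwK), fun h => hwx h.symm⟩
  · exact (compl_adj R w y).2 ⟨fun h => hy (h ▸ hwK), fun h => hwy h.symm⟩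
  · exact (compl_adj R w z).2 ⟨fun h => hz (h ▸ hwK), fun h => hwz h.symm⟩

/-- Every vertex outside `K` has at most `2n` red neighbours outside `K`. -/
lemma out_red_deg (hn : 4 ≤ n) (hfan : ¬ ContainsFan R n)
    (hK4 : ¬ ContainsK4 Rᶜ)
    (K : Finset (Fin (6 * n))) (hKcard : K.card = 2 * n) (hKred : R.IsClique ↑K)
    {v : Fin (6 * n)} (hv : v ∉ K) :
    ((Finset.univ \ K).filter (fun w => R.Adj v w)).card ≤ 2 * n := by
  by_contra h
  set S := (Finset.univ \ K).filter (fun w => R.Adj v w) with hS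
  obtain ⟨f, hinj, hmem, h2⟩ := exists_matching (G := R) 3 n S
    (fun T hT hTc => by
      obtain ⟨a, b, c, ha, hb, hc, hab, hac, hbc⟩ := Finset.two_lt_card_iff.1
        (show 2 < T.card by omega)
      have hmem' : ∀ u ∈ T, u ∉ K := fun u hu => by
        have := hT hu; rw [hS, Finset.mem_filter, Finset.mem_sdiff] at this
        exact this.1.2
      by_contra hno
      push_neg at hno
      exact no_blue_triangle hn hfan hK4 K hKcard hKred
        (hmem' a ha) (hmem' b hb) (hmem' c hc)
        ((compl_adj R a b).2 ⟨hab, hno a ha b hb⟩)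
        ((compl_adj R a c).2 ⟨hac, hno a ha c hc⟩)
        ((compl_adj R b c).2 ⟨hbc, hno b hb c hc⟩))
    (by omega)
  refine hfan (containsFan_of_center v f hinj ?_ ?_ h2)
  · intro p
    have := hmem p
    rw [hS, Finset.mem_filter] at this
    exact this.2.ne'
  · intro p
    have := hmem p
    rw [hS, Finset.mem_filter] at this
    exact this.2

set_option maxRecDepth 100000 in
lemma fin7_indep (I : Finset (Fin 7)) (h : ∀ i ∈ I, i + 1 ∉ I) : I.card ≤ 3 := by
  revert h; revert I; decide

end Main

/-- If an `(Fₙ, K₄)`-free coloring of `K_{6n}` (`n ≥ 4`) contains a red clique `K`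
of order `2n`, then there is no blue cycle of length `7` among the vertices
outside `K`. -/
theorem no_blue_C7_outside (n : ℕ) (hn : 4 ≤ n)
    (R : SimpleGraph (Fin (6 * n)))
    (hfree : ¬ ContainsFan R n ∧ ¬ ContainsK4 Rᶜ)
    (K : Finset (Fin (6 * n))) (hKcard : K.card = 2 * n) (hKred : R.IsClique ↑K) :
    ∀ (v : Fin (6 * n)) (c : Rᶜ.Walk v v), c.IsCycle →
      (∀ x ∈ c.support, x ∉ K) → c.length ≠ 7 := by
  obtain ⟨hfan, hK4⟩ := hfree
  intro v c _hcyc hout h7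
  -- the cycle vertices
  set w : Fin 7 → Fin (6 * n) := fun i => c.getVert i.val with hw
  have hwK : ∀ i, w i ∉ K := by
    intro i
    refine hout _ ?_
    rw [SimpleGraph.Walk.mem_support_iff_exists_getVert]
    exact ⟨i.val, rfl, by omega⟩
  have hadj : ∀ i : Fin 7, Rᶜ.Adj (w i) (w (i + 1)) := by
    intro i
    have hlt : i.val < 7 := i.isLt
    by_cases h6 : i.val < 6
    · have h1 : ((i + 1 : Fin 7)).val = i.val + 1 := by
        rw [Fin.val_add]
        simp only [Fin.val_one]
        omega
      show Rᶜ.Adj (c.getVert i.val) (c.getVert ((i + 1 : Fin 7)).val)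
      rw [h1]
      exact SimpleGraph.Walk.adj_getVert_succ c (by omega)
    · have h6' : i.val = 6 := by omega
      have h0 : ((i + 1 : Fin 7)).val = 0 := by
        rw [Fin.val_add]
        simp only [Fin.val_one]
        omega
      have hv7 : c.getVert 7 = v := by
        conv_lhs => rw [show (7 : ℕ) = c.length from h7.symm]
        exact SimpleGraph.Walk.getVert_length c
      have h67 : Rᶜ.Adj (c.getVert 6) (c.getVert 7) :=
        SimpleGraph.Walk.adj_getVert_succ c (by omega)
      rw [hv7] at h67
      show Rᶜ.Adj (c.getVert i.val) (c.getVert ((i + 1 : Fin 7)).val)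
      rw [h0, SimpleGraph.Walk.getVert_zero, h6']
      exact h67
  -- the outside set and blue neighbourhoods
  set O : Finset (Fin (6 * n)) := Finset.univ \ K with hO
  have hOcard : O.card = 4 * n := by
    rw [hO, Finset.card_sdiff_of_subset (Finset.subset_univ K), Finset.card_univ,
      Fintype.card_fin, hKcard]
    omega
  set N : Fin 7 → Finset (Fin (6 * n)) :=
    fun i => O.filter (fun x => Rᶜ.Adj (w i) x) with hN
  have hNcard : ∀ i, 2 * n - 1 ≤ (N i).card := by
    intro i
    have hsub : O ⊆ N i ∪ insert (w i) (O.filter (fun x => R.Adj (w i) x)) := by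
      intro x hx
      by_cases hblue : Rᶜ.Adj (w i) x
      · exact Finset.mem_union_left _ (Finset.mem_filter.2 ⟨hx, hblue⟩)
      · refine Finset.mem_union_right _ ?_
        rw [compl_adj] at hblue
        by_cases hxx : w i = x
        · rw [← hxx]; exact Finset.mem_insert_self _ _
        · refine Finset.mem_insert_of_mem (Finset.mem_filter.2 ⟨hx, ?_⟩)
          by_contra hred
          exact hblue ⟨hxx, hred⟩
    have hred : (O.filter (fun x => R.Adj (w i) x)).card ≤ 2 * n := by
      have := out_red_deg (R := R) hn hfan hK4 K hKcard hKred (hwK i)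
      rw [← hO] at this
      exact this
    have h1 := Finset.card_le_card hsub
    have h2 := Finset.card_union_le (N i)
      (insert (w i) (O.filter (fun x => R.Adj (w i) x)))
    have h3 := Finset.card_insert_le (w i) (O.filter (fun x => R.Adj (w i) x))
    omega
  have hdisj : ∀ (i : Fin 7) x, x ∈ N i → x ∈ N (i + 1) → False := by
    intro i x h1 h2
    rw [hN, Finset.mem_filter] at h1 h2
    have hxK : x ∉ K := by
      have := h1.1
      rw [hO, Finset.mem_sdiff] at this
      exact this.2
    exact no_blue_triangle hn hfan hK4 K hKcard hKred
      (hwK i) (hwK (i + 1)) hxK (hadj i) h1.2 h2.2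
  have hsum1 : 7 * (2 * n - 1) ≤ ∑ i : Fin 7, (N i).card := by
    have := Finset.card_nsmul_le_sum Finset.univ (fun i : Fin 7 => (N i).card)
      (2 * n - 1) (fun i _ => hNcard i)
    simpa [mul_comm] using this
  have hsum2 : ∑ i : Fin 7, (N i).card ≤ 3 * (4 * n) := by
    have hcf : ∀ i : Fin 7, (N i).card =
        ∑ x ∈ O, if Rᶜ.Adj (w i) x then 1 else 0 := by
      intro i
      rw [hN]
      exact Finset.card_filter _ _
    rw [Finset.sum_congr rfl (fun i _ => hcf i), Finset.sum_comm]
    have hx3 : ∀ x ∈ O, (∑ i : Fin 7, if Rᶜ.Adj (w i) x then 1 else 0) ≤ 3 := by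
      intro x hxO
      have heq : (∑ i : Fin 7, if Rᶜ.Adj (w i) x then 1 else 0) =
          (Finset.univ.filter (fun i : Fin 7 => Rᶜ.Adj (w i) x)).card :=
        (Finset.card_filter _ _).symm
      rw [heq]
      refine fin7_indep _ ?_
      intro i hi hi1
      rw [Finset.mem_filter] at hi hi1
      exact hdisj i x (by rw [hN, Finset.mem_filter]; exact ⟨hxO, hi.2⟩)
        (by rw [hN, Finset.mem_filter]; exact ⟨hxO, hi1.2⟩)
    calc (∑ x ∈ O, ∑ i : Fin 7, if Rᶜ.Adj (w i) x then 1 else 0)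
        ≤ ∑ _x ∈ O, 3 := Finset.sum_le_sum hx3
      _ = 3 * (4 * n) := by rw [Finset.sum_const, hOcard, smul_eq_mul, mul_comm]
  omega
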